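/- Let A be a Dedekind domain with finite residue fields such that for each N ∈ ℕ only finitely many maximal ideals have residue field of cardinality < N (a 'Minkowski' Dedekind domain). Let n be a positive integer. Then for all but finitely many maximal ideals 𝔭 of A, the ideal of the completion Â_𝔭 generated by {x^n − 1 : x ∈ Â_𝔭^×} is the unit ideal. More precisely, if n is not divisible by N(𝔭) − 1, where N(𝔭) is the cardinality of A/𝔭, then some x ∈ Â_𝔭^× has x^n − 1 a unit. -/

import Mathlib

private lemma aux_isUnit_completion {R : Type} [CommRing R] (I : Ideal R)
    (x : AdicCompletion I R) (h : ∀ k, IsUnit (x.val k)) : IsUnit x := by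
  have hy : (fun k => (((h k).unit⁻¹ : (R ⧸ (I ^ k • ⊤ : Ideal R))ˣ) :
      R ⧸ (I ^ k • ⊤ : Ideal R))) ∈ AdicCompletion.submodule I R := by
    intro m k hmk
    have h1 : x.val m * AdicCompletion.transitionMap I R hmk
        (((h k).unit⁻¹ : (R ⧸ (I ^ k • ⊤ : Ideal R))ˣ) : R ⧸ (I ^ k • ⊤ : Ideal R)) = 1 := by
      have h2 := map_mul (AdicCompletion.transitionMapₐ I hmk) (x.val k)
        (((h k).unit⁻¹ : (R ⧸ (I ^ k • ⊤ : Ideal R))ˣ) : R ⧸ (I ^ k • ⊤ : Ideal R))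
      rw [(h k).mul_val_inv, map_one] at h2
      have h3 : (AdicCompletion.transitionMapₐ I hmk) (x.val k) = x.val m := x.property hmk
      rw [h3] at h2
      exact h2.symm
    have h3 : x.val m * (((h m).unit⁻¹ : (R ⧸ (I ^ m • ⊤ : Ideal R))ˣ) :
        R ⧸ (I ^ m • ⊤ : Ideal R)) = 1 := (h m).mul_val_inv
    exact (h m).mul_left_cancel (h1.trans h3.symm)
  refine IsUnit.of_mul_eq_one (a := x) ⟨_, hy⟩ ?_
  ext k
  exact (h k).mul_val_inv

private lemma aux_isUnit_mk {R : Type} [CommRing R] {I : Ideal R} (hI : I.IsMaximal) {a : R}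
    (ha : a ∉ I) (k : ℕ) : IsUnit (Ideal.Quotient.mk (I ^ k • ⊤ : Ideal R) a) := by
  obtain ⟨z, i, hi, hz⟩ := hI.exists_inv ha
  have hsup : Ideal.span {a} ⊔ I = ⊤ := by
    rw [Ideal.eq_top_iff_one, ← hz]
    exact Submodule.add_mem _
      (Ideal.mem_sup_left (Ideal.mem_span_singleton.2 (dvd_mul_left a z)))
      (Ideal.mem_sup_right hi)
  have hsupk : Ideal.span {a} ⊔ I ^ k = ⊤ :=
    Ideal.isCoprime_iff_sup_eq.mp ((Ideal.isCoprime_iff_sup_eq.mpr hsup).pow_right)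
  have h1 : (1 : R) ∈ Ideal.span {a} ⊔ I ^ k := by rw [hsupk]; trivial
  obtain ⟨b, hb, c, hc, hbc⟩ := Submodule.mem_sup.mp h1
  obtain ⟨t, ht⟩ := Ideal.mem_span_singleton.mp hb
  have hJ : (I ^ k • ⊤ : Ideal R) = I ^ k := by ext x; simp
  refine IsUnit.of_mul_eq_one (Ideal.Quotient.mk _ t) ?_
  rw [← map_mul, ← ht]
  have hc0 : Ideal.Quotient.mk (I ^ k • ⊤ : Ideal R) c = 0 :=
    Ideal.Quotient.eq_zero_iff_mem.2 (by rw [hJ]; exact hc)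
  calc Ideal.Quotient.mk (I ^ k • ⊤ : Ideal R) b
      = Ideal.Quotient.mk _ b + Ideal.Quotient.mk _ c := by rw [hc0, add_zero]
    _ = 1 := by rw [← map_add, hbc, map_one]

private lemma aux_key {A : Type} [CommRing A] (𝔭 : Ideal A) (h𝔭 : 𝔭.IsMaximal)
    [Finite (A ⧸ 𝔭)] {n : ℕ} (h : ¬ (Nat.card (A ⧸ 𝔭) - 1) ∣ n) :
    ∃ x : (AdicCompletion 𝔭 A)ˣ, IsUnit ((x : AdicCompletion 𝔭 A) ^ n - 1) := by
  haveI : 𝔭.IsMaximal := h𝔭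
  letI : Field (A ⧸ 𝔭) := Ideal.Quotient.field 𝔭
  obtain ⟨g, hg⟩ := IsCyclic.exists_generator (α := (A ⧸ 𝔭)ˣ)
  have horder : orderOf g = Nat.card (A ⧸ 𝔭) - 1 := by
    rw [orderOf_eq_card_of_forall_mem_zpowers hg, Nat.card_units]
  have hgn : g ^ n ≠ 1 := fun he => h (horder ▸ orderOf_dvd_of_pow_eq_one he)
  obtain ⟨a, ha⟩ := Ideal.Quotient.mk_surjective (I := 𝔭) (g : A ⧸ 𝔭)
  have ha1 : a ∉ 𝔭 := by
    intro hmem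
    exact g.ne_zero (by rw [← ha, Ideal.Quotient.eq_zero_iff_mem.2 hmem])
  have ha2 : a ^ n - 1 ∉ 𝔭 := by
    intro hmem
    apply hgn
    have h0 : Ideal.Quotient.mk 𝔭 (a ^ n - 1) = 0 := Ideal.Quotient.eq_zero_iff_mem.2 hmem
    rw [map_sub, map_pow, ha, map_one, sub_eq_zero] at h0
    apply Units.ext
    rw [Units.val_pow_eq_pow_val, Units.val_one]
    exact h0
  have hval : ∀ (b : A) (k : ℕ), (algebraMap A (AdicCompletion 𝔭 A) b).val k =
      Ideal.Quotient.mk (𝔭 ^ k • ⊤ : Ideal A) b := fun b k => rfl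
  have hx : IsUnit (algebraMap A (AdicCompletion 𝔭 A) a) :=
    aux_isUnit_completion 𝔭 _ (fun k => by rw [hval]; exact aux_isUnit_mk h𝔭 ha1 k)
  refine ⟨hx.unit, ?_⟩
  have hspec : (hx.unit : AdicCompletion 𝔭 A) = algebraMap A (AdicCompletion 𝔭 A) a :=
    hx.unit_spec
  rw [hspec, ← map_pow, ← map_one (algebraMap A (AdicCompletion 𝔭 A)), ← map_sub]
  exact aux_isUnit_completion 𝔭 _ (fun k => by rw [hval]; exact aux_isUnit_mk h𝔭 ha2 k)

/-- Let `A` be a Minkowski Dedekind domain (finite residue fields; only finitely many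
maximal ideals of norm below any bound) and `n` a positive integer. Then for all but
finitely many maximal ideals `𝔭`, the ideal of `Â_𝔭` generated by `{x^n − 1 : x unit}` is
the unit ideal; more precisely, if `N(𝔭) − 1 ∤ n` then some unit `x` of `Â_𝔭` has
`x^n − 1` a unit. -/
theorem stmt_9 {A : Type} [CommRing A] [IsDomain A] [IsDedekindDomain A]
    (hfin : ∀ 𝔭 : MaximalSpectrum A, Finite (A ⧸ 𝔭.asIdeal))
    (hmink : ∀ N : ℕ, {𝔭 : MaximalSpectrum A | Nat.card (A ⧸ 𝔭.asIdeal) < N}.Finite)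
    (n : ℕ) (hn : 0 < n) :
    {𝔭 : MaximalSpectrum A |
        Ideal.span {y : AdicCompletion 𝔭.asIdeal A |
          ∃ x : (AdicCompletion 𝔭.asIdeal A)ˣ,
            y = (x : AdicCompletion 𝔭.asIdeal A) ^ n - 1} ≠ ⊤}.Finite ∧
    ∀ 𝔭 : MaximalSpectrum A, ¬ (Nat.card (A ⧸ 𝔭.asIdeal) - 1) ∣ n →
      ∃ x : (AdicCompletion 𝔭.asIdeal A)ˣ,
        IsUnit ((x : AdicCompletion 𝔭.asIdeal A) ^ n - 1) := by
  constructor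
  · apply (hmink (n + 2)).subset
    intro 𝔭 hbad
    simp only [Set.mem_setOf_eq] at hbad ⊢
    by_contra hlt
    push_neg at hlt
    have hdvd : ¬ (Nat.card (A ⧸ 𝔭.asIdeal) - 1) ∣ n := by
      intro hd
      have := Nat.le_of_dvd hn hd
      omega
    haveI := hfin 𝔭
    obtain ⟨x, hu⟩ := aux_key 𝔭.asIdeal 𝔭.isMaximal hdvd
    exact hbad (Ideal.eq_top_of_isUnit_mem _ (Ideal.subset_span ⟨x, rfl⟩) hu)
  · intro 𝔭 hd
    haveI := hfin 𝔭
    exact aux_key 𝔭.asIdeal 𝔭.isMaximal hd
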